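/- Every simple signed graph whose underlying graph is K_4-minor-free satisfies χ(G) ≤ 3. -/

import Mathlib

/-- The colour set `M_n`: `{±1,…,±k}` if `n = 2k`, and `{0,±1,…,±k}` if `n = 2k+1`. -/
def Mset (n : ℕ) : Set ℤ := {x | 2 * x.natAbs ≤ n ∧ (x ≠ 0 ∨ n % 2 = 1)}

/-- `σ` is a signature: symmetric with values in `{+1, -1}`. -/
def IsSignature {V : Type*} (σ : V → V → ℤ) : Prop :=
  (∀ u v, σ u v = σ v u) ∧ (∀ u v, σ u v = 1 ∨ σ u v = -1)

/-- A proper colouring of the signed graph `(G, σ)`. -/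
def IsProperSignedColoring {V : Type*} (G : SimpleGraph V) (σ : V → V → ℤ) (φ : V → ℤ) : Prop :=
  ∀ u v, G.Adj u v → φ u ≠ σ u v * φ v

/-- `(G, σ)` admits a proper colouring with colours in `M_n`. -/
def SignedColorable {V : Type*} (G : SimpleGraph V) (σ : V → V → ℤ) (n : ℕ) : Prop :=
  ∃ φ : V → ℤ, IsProperSignedColoring G σ φ ∧ ∀ v, φ v ∈ Mset n

/-- The chromatic number of the signed graph `(G, σ)`. -/
noncomputable def signedChromaticNumber {V : Type*} (G : SimpleGraph V) (σ : V → V → ℤ) : ℕ :=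
  sInf {n | SignedColorable G σ n}

/-- `H` is a minor of `G`, witnessed by disjoint nonempty connected branch sets, one for each
vertex of `H`, with an edge of `G` between the branch sets of any two adjacent vertices of `H`. -/
def HasMinor {V W : Type*} (G : SimpleGraph V) (H : SimpleGraph W) : Prop :=
  ∃ f : W → Set V, (∀ i, (f i).Nonempty) ∧ (∀ i, (G.induce (f i)).Connected) ∧
    (Pairwise fun i j => Disjoint (f i) (f j)) ∧
    ∀ i j, H.Adj i j → ∃ u ∈ f i, ∃ v ∈ f j, G.Adj u v


open SimpleGraph
set_option linter.unusedSectionVars false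
set_option maxHeartbeats 1600000
section Helpers
variable {V : Type*}


lemma reach_lift {α : Type*} (A : SimpleGraph α) (G : SimpleGraph V) (T : Set V)
    (g : α → V) (hg : ∀ a, g a ∈ T)
    (hadj : ∀ a b, A.Adj a b → (G.induce T).Reachable ⟨g a, hg a⟩ ⟨g b, hg b⟩)
    {a b : α} (r : A.Reachable a b) : (G.induce T).Reachable ⟨g a, hg a⟩ ⟨g b, hg b⟩ := by
  obtain ⟨p⟩ := r
  induction p with
  | nil => exact Reachable.refl _
  | cons h q ih => exact (hadj _ _ h).trans ih

lemma degree_ge {α : Type*} (A : SimpleGraph α) [DecidableRel A.Adj] [Fintype α] (x : α)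
    (t : Finset α) (h : ∀ w ∈ t, A.Adj x w) : t.card ≤ A.degree x := by
  classical
  have hsub : t ⊆ A.neighborFinset x := fun w hw => by
    rw [SimpleGraph.mem_neighborFinset]; exact h w hw
  rw [← SimpleGraph.card_neighborFinset_eq_degree]
  exact Finset.card_le_card hsub

lemma hasMinor_of_induce {W : Type*} (G : SimpleGraph V) (H : SimpleGraph W) (s : Set V)
    (h : HasMinor (G.induce s) H) : HasMinor G H := by
  obtain ⟨f, hne, hconn, hdisj, hedge⟩ := h
  refine ⟨fun i => Subtype.val '' f i, fun i => (hne i).image _, fun i => ?_, ?_, ?_⟩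
  · have hg : ∀ a : f i, (a : s).val ∈ Subtype.val '' f i := fun a => ⟨a.1, a.2, rfl⟩
    have hpre := (hconn i).preconnected
    have hnon := (hconn i).nonempty
    rw [SimpleGraph.connected_iff_exists_forall_reachable]
    obtain ⟨a0⟩ := hnon
    refine ⟨⟨a0.1.1, hg a0⟩, ?_⟩
    rintro ⟨w, aw, haw, rfl⟩
    exact reach_lift ((G.induce s).induce (f i)) G _ _ hg
      (fun a b hab => SimpleGraph.Adj.reachable (by exact hab))
      (hpre a0 ⟨aw, haw⟩)
  · intro i j hij
    have hd := hdisj hij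
    show Disjoint (Subtype.val '' f i) (Subtype.val '' f j)
    have hd' : Disjoint (f i) (f j) := hd
    rw [Set.disjoint_left] at hd' ⊢
    rintro x ⟨a, ha, rfl⟩ ⟨b, hb, hba⟩
    have hab : b = a := Subtype.val_injective hba
    exact hd' ha (hab ▸ hb)
  · intro i j hij
    obtain ⟨u, hu, w, hw, huw⟩ := hedge i j hij
    exact ⟨u.1, ⟨u, hu, rfl⟩, w.1, ⟨w, hw, rfl⟩, huw⟩

-- the vertex type after contracting S to r
abbrev Qt (S : Set V) (r : V) : Type _ := {w : V // w ∉ S ∨ w = r}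

def quotG (G : SimpleGraph V) (S : Set V) (r : V) : SimpleGraph (Qt S r) where
  Adj x y := x.val ≠ y.val ∧ (G.Adj x.val y.val ∨ (x.val = r ∧ ∃ s ∈ S, G.Adj s y.val)
    ∨ (y.val = r ∧ ∃ s ∈ S, G.Adj s x.val))
  symm := by
    constructor
    rintro x y ⟨hne, h⟩
    refine ⟨hne.symm, ?_⟩
    rcases h with h | h | h
    · exact Or.inl h.symm
    · exact Or.inr (Or.inr h)
    · exact Or.inr (Or.inl h)
  loopless := ⟨fun x h => h.1 rfl⟩

def rq (S : Set V) (r : V) : Qt S r := ⟨r, Or.inr rfl⟩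

lemma hasMinor_of_quot {W : Type*} (G : SimpleGraph V) (S : Set V) (r : V) (hr : r ∈ S)
    (hS : (G.induce S).Connected) (H : SimpleGraph W)
    (h : HasMinor (quotG G S r) H) : HasMinor G H := by
  obtain ⟨f, hne, hconn, hdisj, hedge⟩ := h
  set F : W → Set V := fun i => Subtype.val '' f i ∪ {x | rq S r ∈ f i ∧ x ∈ S} with hF
  have hSsub : ∀ i, rq S r ∈ f i → S ⊆ F i := fun i hri x hx => Or.inr ⟨hri, hx⟩
  have hvalF : ∀ i (a : Qt S r), a ∈ f i → a.val ∈ F i := fun i a ha => Or.inl ⟨a, ha, rfl⟩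
  -- reachability within S inside F i
  have hreachS : ∀ i (hri : rq S r ∈ f i) (x y : V) (hx : x ∈ S) (hy : y ∈ S),
      (G.induce (F i)).Reachable ⟨x, hSsub i hri hx⟩ ⟨y, hSsub i hri hy⟩ := by
    intro i hri x y hx hy
    have := hS.preconnected ⟨x, hx⟩ ⟨y, hy⟩
    have hsub : S ⊆ F i := hSsub i hri
    exact (this.map (induceHomOfLE G hsub).toHom)
  -- key adjacency lift
  have hadj : ∀ i (a b : (f i : Set (Qt S r))),
      ((quotG G S r).induce (f i)).Adj a b →
      (G.induce (F i)).Reachable ⟨(a : Qt S r).val, hvalF i _ a.2⟩ ⟨(b : Qt S r).val, hvalF i _ b.2⟩ := by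
    rintro i a b ⟨hne, hab⟩
    rcases hab with h | ⟨har, s, hs, hsadj⟩ | ⟨hbr, s, hs, hsadj⟩
    · exact SimpleGraph.Adj.reachable (by exact h)
    · -- a.val = r
      have heq : (a : Qt S r) = rq S r := Subtype.ext (by exact har)
      have hri : rq S r ∈ f i := heq ▸ a.2
      have h1 : (G.induce (F i)).Reachable ⟨(a:Qt S r).val, hvalF i _ a.2⟩ ⟨s, hSsub i hri hs⟩ := by
        have := hreachS i hri (a:Qt S r).val s (Set.mem_of_eq_of_mem (show (a:Qt S r).val = r by exact har) hr) hs
        exact this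
      refine h1.trans (SimpleGraph.Adj.reachable ?_)
      exact (show (G.induce (F i)).Adj ⟨s, hSsub i hri hs⟩ ⟨(b:Qt S r).val, hvalF i _ b.2⟩
        from by exact hsadj)
    · have heq : (b : Qt S r) = rq S r := Subtype.ext (by exact hbr)
      have hri : rq S r ∈ f i := heq ▸ b.2
      have h1 : (G.induce (F i)).Reachable ⟨s, hSsub i hri hs⟩ ⟨(b:Qt S r).val, hvalF i _ b.2⟩ := by
        have := hreachS i hri s (b:Qt S r).val hs (Set.mem_of_eq_of_mem (show (b:Qt S r).val = r by exact hbr) hr)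
        exact this
      exact (SimpleGraph.Adj.reachable
        (show (G.induce (F i)).Adj ⟨(a:Qt S r).val, hvalF i _ a.2⟩ ⟨s, hSsub i hri hs⟩
          from by exact hsadj.symm)).trans h1
  have hkey : ∀ i (a b : Qt S r) (ha : a ∈ f i) (hb : b ∈ f i),
      (G.induce (F i)).Reachable ⟨a.val, hvalF i a ha⟩ ⟨b.val, hvalF i b hb⟩ := by
    intro i a b ha hb
    have hp := (hconn i).preconnected ⟨a, ha⟩ ⟨b, hb⟩
    exact reach_lift ((quotG G S r).induce (f i)) G (F i)
      (fun x => (x : Qt S r).val) (fun x => hvalF i _ x.2) (hadj i) hp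
  refine ⟨F, ?_, ?_, ?_, ?_⟩
  · intro i
    obtain ⟨a, ha⟩ := hne i
    exact ⟨a.val, hvalF i a ha⟩
  · intro i
    obtain ⟨a0, ha0⟩ := hne i
    rw [SimpleGraph.connected_iff_exists_forall_reachable]
    refine ⟨⟨a0.val, hvalF i a0 ha0⟩, ?_⟩
    rintro ⟨w, hw⟩
    rcases hw with ⟨b, hb, rfl⟩ | ⟨hri, hwS⟩
    · exact hkey i a0 b ha0 hb
    · refine (hkey i a0 (rq S r) ha0 hri).trans ?_
      exact hreachS i hri r w hr hwS
  · intro i j hij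
    have hd : Disjoint (f i) (f j) := hdisj hij
    rw [Set.disjoint_left] at hd
    rw [Set.disjoint_left]
    rintro x (⟨a, ha, rfl⟩ | ⟨hri, hxS⟩)
    · rintro (⟨b, hb, hba⟩ | ⟨hrj, hxS⟩)
      · exact hd ha (Subtype.ext hba.symm ▸ hb)
      · -- a.val ∈ S, so a.val = r, so a = rq ∈ f i, but rq ∈ f j
        rcases a.2 with h | h
        · exact h hxS
        · have heq : a = rq S r := Subtype.ext (by exact h)
          exact hd (heq ▸ ha) hrj
    · rintro (⟨b, hb, hbx⟩ | ⟨hrj, _⟩)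
      · rcases b.2 with h | h
        · exact h (hbx ▸ hxS)
        · have heq : b = rq S r := Subtype.ext (by exact h)
          exact hd hri (heq ▸ hb)
      · exact hd hri hrj
  · intro i j hij
    obtain ⟨u, hu, w, hw, huw⟩ := hedge i j hij
    rcases huw with ⟨hne, h | ⟨hur, s, hs, hsadj⟩ | ⟨hwr, s, hs, hsadj⟩⟩
    · exact ⟨u.val, hvalF i u hu, w.val, hvalF j w hw, h⟩
    · have heq : u = rq S r := Subtype.ext (by exact hur)
      have hri : rq S r ∈ f i := heq ▸ hu
      exact ⟨s, hSsub i hri hs, w.val, hvalF j w hw, hsadj⟩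
    · have heq : w = rq S r := Subtype.ext (by exact hwr)
      have hrj : rq S r ∈ f j := heq ▸ hw
      exact ⟨u.val, hvalF i u hu, s, hSsub j hrj hs, hsadj.symm⟩



variable [DecidableEq V]

lemma quot_deg_ge1 (G : SimpleGraph V) (S : Set V) (r : V) [Fintype (Qt S r)]
    [DecidableRel (quotG G S r).Adj] (x : Qt S r)
    (t : Finset V) (htS : ∀ w ∈ t, w ∉ S) (hadj : ∀ w ∈ t, G.Adj x.val w) :
    t.card ≤ (quotG G S r).degree x := by
  classical
  have hinj : Function.Injective (fun w : {w // w ∈ t} => (⟨w.val, Or.inl (htS w.val w.2)⟩ : Qt S r)) := by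
    intro u v h
    have h2 := congrArg Subtype.val h
    exact Subtype.ext h2
  refine le_trans (le_of_eq ?_) (degree_ge _ x (t.attach.map ⟨_, hinj⟩) ?_)
  · simp
  · intro w hw
    simp only [Finset.mem_map, Finset.mem_attach, true_and] at hw
    obtain ⟨u, hu⟩ := hw
    subst hu
    exact ⟨(hadj u.val u.2).ne, Or.inl (hadj u.val u.2)⟩

lemma quot_deg_ge2 (G : SimpleGraph V) (S : Set V) (r : V) [Fintype (Qt S r)]
    [DecidableRel (quotG G S r).Adj] (x : Qt S r) (hx : x.val ∉ S) (hr : r ∈ S)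
    (t : Finset V) (htS : ∀ w ∈ t, w ∉ S) (hadj : ∀ w ∈ t, G.Adj x.val w)
    (s : V) (hs : s ∈ S) (hxs : G.Adj x.val s) :
    t.card + 1 ≤ (quotG G S r).degree x := by
  classical
  have hinj : Function.Injective (fun w : {w // w ∈ t} => (⟨w.val, Or.inl (htS w.val w.2)⟩ : Qt S r)) := by
    intro u v h; have h2 := congrArg Subtype.val h
    exact Subtype.ext h2
  have hnotmem : rq S r ∉ t.attach.map ⟨_, hinj⟩ := by
    simp only [Finset.mem_map, Finset.mem_attach, true_and]
    rintro ⟨u, hu⟩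
    have : (rq S r).val = u.val := congrArg Subtype.val hu.symm
    exact htS u.val u.2 (this ▸ hr)
  refine le_trans (le_of_eq ?_) (degree_ge _ x (insert (rq S r) (t.attach.map ⟨_, hinj⟩)) ?_)
  · rw [Finset.card_insert_of_notMem hnotmem]; simp [add_comm]
  · intro w hw
    rcases Finset.mem_insert.1 hw with rfl | hw
    · exact ⟨fun h => hx (h ▸ hr), Or.inr (Or.inr ⟨rfl, s, hs, hxs.symm⟩)⟩
    · simp only [Finset.mem_map, Finset.mem_attach, true_and] at hw
      obtain ⟨u, hu⟩ := hw
      subst hu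
      exact ⟨(hadj u.val u.2).ne, Or.inl (hadj u.val u.2)⟩

lemma quot_deg_rq (G : SimpleGraph V) (S : Set V) (r : V) [Fintype (Qt S r)]
    [DecidableRel (quotG G S r).Adj] (hr : r ∈ S)
    (t : Finset V) (htS : ∀ w ∈ t, w ∉ S) (hadj : ∀ w ∈ t, ∃ s ∈ S, G.Adj s w) :
    t.card ≤ (quotG G S r).degree (rq S r) := by
  classical
  have hinj : Function.Injective (fun w : {w // w ∈ t} => (⟨w.val, Or.inl (htS w.val w.2)⟩ : Qt S r)) := by
    intro u v h; have h2 := congrArg Subtype.val h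
    exact Subtype.ext h2
  refine le_trans (le_of_eq ?_) (degree_ge _ _ (t.attach.map ⟨_, hinj⟩) ?_)
  · simp
  · intro w hw
    simp only [Finset.mem_map, Finset.mem_attach, true_and] at hw
    obtain ⟨u, hu⟩ := hw
    subst hu
    exact ⟨fun h => htS u.val u.2 (h.symm ▸ hr), Or.inr (Or.inl ⟨rfl, hadj u.val u.2⟩)⟩

lemma induce_degree_ge (G : SimpleGraph V) (s : Set V) [Fintype s]
    [DecidableRel (G.induce s).Adj] (x : s)
    (t : Finset V) (h : ∀ w ∈ t, w ∈ s) (hadj : ∀ w ∈ t, G.Adj x.val w) :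
    t.card ≤ (G.induce s).degree x := by
  classical
  have hinj : Function.Injective (fun w : {w // w ∈ t} => (⟨w.val, h w.val w.2⟩ : s)) := by
    intro u v hh
    have h2 := congrArg Subtype.val hh
    exact Subtype.ext h2
  refine le_trans (le_of_eq ?_) (degree_ge _ x (t.attach.map ⟨_, hinj⟩) ?_)
  · simp
  · intro w hw
    simp only [Finset.mem_map, Finset.mem_attach, true_and] at hw
    obtain ⟨u, hu⟩ := hw
    subst hu
    exact (by exact hadj u.val u.2 : (G.induce s).Adj x ⟨u.val, _⟩)

lemma card_Qt_lt [Fintype V] (S : Set V) (r : V) [Fintype (Qt S r)] (s0 : V) (hs0 : s0 ∈ S)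
    (hne : s0 ≠ r) : Fintype.card (Qt S r) < Fintype.card V := by
  classical
  refine Fintype.card_lt_of_injective_of_notMem (b := s0) Subtype.val Subtype.val_injective ?_
  rintro ⟨⟨w, hw⟩, rfl⟩
  rcases hw with h | h
  exacts [h hs0, hne h]

lemma induce_singleton_connected (G : SimpleGraph V) (x : V) :
    (G.induce ({x} : Set V)).Connected := by
  rw [SimpleGraph.connected_iff_exists_forall_reachable]
  refine ⟨⟨x, rfl⟩, fun b => ?_⟩
  have : (⟨x, rfl⟩ : ({x} : Set V)) = b := Subtype.ext b.2.symm
  exact this ▸ Reachable.refl _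

lemma esymm {G : SimpleGraph V} {A B : Set V} (h : ∃ u ∈ A, ∃ v ∈ B, G.Adj u v) :
    ∃ u ∈ B, ∃ v ∈ A, G.Adj u v := by
  obtain ⟨u, hu, v, hv, h⟩ := h
  exact ⟨v, hv, u, hu, h.symm⟩

lemma hasMinor_K4_explicit (G : SimpleGraph V) (A B C D : Set V)
    (hA : (G.induce A).Connected) (hB : (G.induce B).Connected)
    (hC : (G.induce C).Connected) (hD : (G.induce D).Connected)
    (dAB : Disjoint A B) (dAC : Disjoint A C) (dAD : Disjoint A D)
    (dBC : Disjoint B C) (dBD : Disjoint B D) (dCD : Disjoint C D)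
    (eAB : ∃ u ∈ A, ∃ v ∈ B, G.Adj u v) (eAC : ∃ u ∈ A, ∃ v ∈ C, G.Adj u v)
    (eAD : ∃ u ∈ A, ∃ v ∈ D, G.Adj u v) (eBC : ∃ u ∈ B, ∃ v ∈ C, G.Adj u v)
    (eBD : ∃ u ∈ B, ∃ v ∈ D, G.Adj u v) (eCD : ∃ u ∈ C, ∃ v ∈ D, G.Adj u v) :
    HasMinor G (⊤ : SimpleGraph (Fin 4)) := by
  refine ⟨![A, B, C, D], ?_, ?_, ?_, ?_⟩
  · intro i
    fin_cases i
    exacts [Set.nonempty_coe_sort.1 hA.nonempty, Set.nonempty_coe_sort.1 hB.nonempty,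
      Set.nonempty_coe_sort.1 hC.nonempty, Set.nonempty_coe_sort.1 hD.nonempty]
  · intro i
    fin_cases i
    exacts [hA, hB, hC, hD]
  · intro i j hij
    fin_cases i <;> fin_cases j <;>
      first
        | exact absurd rfl hij
        | exact dAB | exact dAC | exact dAD | exact dBC | exact dBD | exact dCD
        | exact dAB.symm | exact dAC.symm | exact dAD.symm | exact dBC.symm
        | exact dBD.symm | exact dCD.symm
  · intro i j hij
    have hne : i ≠ j := hij.ne
    fin_cases i <;> fin_cases j <;>
      first
        | exact absurd rfl hne
        | exact eAB | exact eAC | exact eAD | exact eBC | exact eBD | exact eCD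
        | exact esymm eAB | exact esymm eAC | exact esymm eAD | exact esymm eBC
        | exact esymm eBD | exact esymm eCD


end Helpers

section Helpers2
set_option linter.unusedSectionVars false
variable {V : Type*} [Fintype V] (G : SimpleGraph V) [DecidableRel G.Adj]

lemma induce_image_connected (s : Set V) (t : Set s)
    (h : ((G.induce s).induce t).Connected) : (G.induce (Subtype.val '' t)).Connected := by
  have hg : ∀ a : t, (a : s).val ∈ Subtype.val '' t := fun a => ⟨a.1, a.2, rfl⟩
  rw [SimpleGraph.connected_iff_exists_forall_reachable]
  obtain ⟨a0⟩ := h.nonempty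
  refine ⟨⟨a0.1.1, hg a0⟩, ?_⟩
  rintro ⟨w, aw, haw, rfl⟩
  exact reach_lift ((G.induce s).induce t) G _ _ hg
    (fun a b hab => SimpleGraph.Adj.reachable (by exact hab))
    (h.preconnected a0 ⟨aw, haw⟩)

lemma nbhd_eq (x : V) (t : Finset V) (h : ∀ w ∈ t, G.Adj x w) (hc : G.degree x ≤ t.card) :
    ∀ w, G.Adj x w → w ∈ t := by
  have hsub : t ⊆ G.neighborFinset x := fun w hw => (SimpleGraph.mem_neighborFinset G x w).2 (h w hw)
  have heq := Finset.eq_of_subset_of_card_le hsub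
    (by rw [SimpleGraph.card_neighborFinset_eq_degree]; exact hc)
  intro w hw
  rw [heq]
  exact (SimpleGraph.mem_neighborFinset G x w).2 hw

lemma card_ge_four (u : V) (h : 3 ≤ G.degree u) : 4 ≤ Fintype.card V := by
  classical
  have hnm : u ∉ G.neighborFinset u := by
    simp
  have h1 : (insert u (G.neighborFinset u)).card = G.degree u + 1 := by
    rw [Finset.card_insert_of_notMem hnm, SimpleGraph.card_neighborFinset_eq_degree]
  have := Finset.card_le_univ (insert u (G.neighborFinset u))
  rw [h1] at this
  have : G.degree u + 1 ≤ Fintype.card V := this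
  omega

lemma card_set_lt (s : Set V) [Fintype s] (z : V) (hz : z ∉ s) :
    Fintype.card s < Fintype.card V := by
  classical
  refine Fintype.card_lt_of_injective_of_notMem (b := z) Subtype.val Subtype.val_injective ?_
  rintro ⟨⟨w, hw⟩, rfl⟩
  exact hz hw

end Helpers2

universe u

def TTstmt (n : ℕ) : Prop :=
  ∀ {V' : Type u} [Fintype V'] (G' : SimpleGraph V') [DecidableRel G'.Adj] (β' : V'),
    Fintype.card V' ≤ n → 1 ≤ G'.degree β' → (∀ y, y ≠ β' → 3 ≤ G'.degree y) →
    HasMinor G' (⊤ : SimpleGraph (Fin 4))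

section Steps
set_option linter.unusedSectionVars false
variable {V : Type u} [Fintype V] (G : SimpleGraph V) [DecidableRel G.Adj]

lemma del_step (n : ℕ) (ih : TTstmt.{u} n) (s : Set V) (z : V) (hz : z ∉ s)
    (hcard : Fintype.card V ≤ n + 1) (β' : s)
    (hdeg1 : ∀ [Fintype s] [DecidableRel (G.induce s).Adj], 1 ≤ (G.induce s).degree β')
    (hdeg3 : ∀ [Fintype s] [DecidableRel (G.induce s).Adj],
      ∀ y : s, y ≠ β' → 3 ≤ (G.induce s).degree y) :
    HasMinor G (⊤ : SimpleGraph (Fin 4)) := by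
  classical
  apply hasMinor_of_induce G _ s
  letI : DecidableRel (G.induce s).Adj := Classical.decRel _
  refine ih (G.induce s) β' ?_ hdeg1 hdeg3
  have := card_set_lt s z hz
  omega

lemma pair_step (n : ℕ) (ih : TTstmt.{u} n) (v x : V) (hvx : G.Adj v x)
    (hcard : Fintype.card V ≤ n + 1)
    (hgood : ∀ y, y ≠ v → y ≠ x → 3 ≤ G.degree y)
    (hcommon : ∀ y, y ≠ v → y ≠ x → G.Adj y v → G.Adj y x → 4 ≤ G.degree y)
    (tm : Finset V) (htm1 : ∀ w ∈ tm, w ≠ v ∧ w ≠ x)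
    (htm2 : ∀ w ∈ tm, G.Adj v w ∨ G.Adj x w) (htmcard : 1 ≤ tm.card) :
    HasMinor G (⊤ : SimpleGraph (Fin 4)) := by
  classical
  set S : Set V := {v, x} with hSdef
  have hmemS : ∀ w, w ∈ S ↔ (w = v ∨ w = x) := fun w => by simp [hSdef]
  have hrS : x ∈ S := (hmemS x).2 (Or.inr rfl)
  have hvS : v ∈ S := (hmemS v).2 (Or.inl rfl)
  have hSconn : (G.induce S).Connected := induce_pair_connected_of_adj (by exact hvx)
  apply hasMinor_of_quot G S x hrS hSconn
  letI : DecidableRel (quotG G S x).Adj := Classical.decRel _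
  refine ih (quotG G S x) (rq S x) ?_ ?_ ?_
  · have h1 : Fintype.card (Qt S x) < Fintype.card V := card_Qt_lt S x v hvS hvx.ne
    omega
  · refine le_trans htmcard (quot_deg_rq G S x hrS tm ?_ ?_)
    · intro w hw
      rw [hmemS]
      rintro (h | h)
      exacts [(htm1 w hw).1 h, (htm1 w hw).2 h]
    · intro w hw
      rcases htm2 w hw with h | h
      exacts [⟨v, hvS, h⟩, ⟨x, hrS, h⟩]
  · intro y hy
    have hyS : y.val ∉ S := by
      rcases y.2 with h | h
      · exact h
      · exact absurd (Subtype.ext h) hy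
    have hyv : y.val ≠ v := fun h => hyS ((hmemS _).2 (Or.inl h))
    have hyx : y.val ≠ x := fun h => hyS ((hmemS _).2 (Or.inr h))
    have hdegy := hgood y.val hyv hyx
    by_cases hav : G.Adj y.val v <;> by_cases hax : G.Adj y.val x
    · have h4 := hcommon y.val hyv hyx hav hax
      have hvmem : v ∈ G.neighborFinset y.val := by
        rw [SimpleGraph.mem_neighborFinset]; exact hav
      have hxmem : x ∈ (G.neighborFinset y.val).erase v := by
        rw [Finset.mem_erase, SimpleGraph.mem_neighborFinset]
        exact ⟨hvx.ne.symm, hax⟩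
      set t := ((G.neighborFinset y.val).erase v).erase x with ht
      have hcardt : t.card = G.degree y.val - 2 := by
        rw [ht, Finset.card_erase_of_mem hxmem, Finset.card_erase_of_mem hvmem,
          SimpleGraph.card_neighborFinset_eq_degree]
        omega
      have h3 : 3 ≤ t.card + 1 := by omega
      refine le_trans h3 (quot_deg_ge2 G S x y hyS hrS t ?_ ?_ v hvS hav)
      · intro w hw
        rw [ht, Finset.mem_erase, Finset.mem_erase] at hw
        rw [hmemS]
        rintro (h | h)
        exacts [hw.2.1 h, hw.1 h]
      · intro w hw
        rw [ht, Finset.mem_erase, Finset.mem_erase, SimpleGraph.mem_neighborFinset] at hw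
        exact hw.2.2
    · set t := (G.neighborFinset y.val).erase v with ht
      have hvmem : v ∈ G.neighborFinset y.val := by
        rw [SimpleGraph.mem_neighborFinset]; exact hav
      have hcardt : t.card = G.degree y.val - 1 := by
        rw [ht, Finset.card_erase_of_mem hvmem, SimpleGraph.card_neighborFinset_eq_degree]
      have h3 : 3 ≤ t.card + 1 := by omega
      refine le_trans h3 (quot_deg_ge2 G S x y hyS hrS t ?_ ?_ v hvS hav)
      · intro w hw
        rw [ht, Finset.mem_erase, SimpleGraph.mem_neighborFinset] at hw
        rw [hmemS]
        rintro (h | h)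
        · exact hw.1 h
        · exact hax (h ▸ hw.2)
      · intro w hw
        rw [ht, Finset.mem_erase, SimpleGraph.mem_neighborFinset] at hw
        exact hw.2
    · set t := (G.neighborFinset y.val).erase x with ht
      have hxmem : x ∈ G.neighborFinset y.val := by
        rw [SimpleGraph.mem_neighborFinset]; exact hax
      have hcardt : t.card = G.degree y.val - 1 := by
        rw [ht, Finset.card_erase_of_mem hxmem, SimpleGraph.card_neighborFinset_eq_degree]
      have h3 : 3 ≤ t.card + 1 := by omega
      refine le_trans h3 (quot_deg_ge2 G S x y hyS hrS t ?_ ?_ x hrS hax)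
      · intro w hw
        rw [ht, Finset.mem_erase, SimpleGraph.mem_neighborFinset] at hw
        rw [hmemS]
        rintro (h | h)
        · exact hav (h ▸ hw.2)
        · exact hw.1 h
      · intro w hw
        rw [ht, Finset.mem_erase, SimpleGraph.mem_neighborFinset] at hw
        exact hw.2
    · refine le_trans ?_ (quot_deg_ge1 G S x y (G.neighborFinset y.val) ?_ ?_)
      · rw [SimpleGraph.card_neighborFinset_eq_degree]; exact hdegy
      · intro w hw
        rw [SimpleGraph.mem_neighborFinset] at hw
        rw [hmemS]
        rintro (h | h)
        · exact hav (h ▸ hw)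
        · exact hax (h ▸ hw)
      · intro w hw
        rw [SimpleGraph.mem_neighborFinset] at hw
        exact hw
end Steps

section Steps2
set_option linter.unusedSectionVars false
variable {V : Type u} [Fintype V] (G : SimpleGraph V) [DecidableRel G.Adj]

lemma tri_step (n : ℕ) (ih : TTstmt.{u} n) (β p q x y : V)
    (hcard : Fintype.card V ≤ n + 1)
    (hβp : G.Adj β p) (hβq : G.Adj β q) (hpq : G.Adj p q)
    (hNβ : ∀ w, G.Adj β w → w = p ∨ w = q)
    (hNp : ∀ w, G.Adj p w → w = β ∨ w = q ∨ w = x) (hpx : G.Adj p x)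
    (hNq : ∀ w, G.Adj q w → w = β ∨ w = p ∨ w = y) (hqy : G.Adj q y)
    (hxy : x ≠ y) (hxβ : x ≠ β) (hxq : x ≠ q) (hyβ : y ≠ β) (hyp : y ≠ p)
    (hgood : ∀ z, z ≠ β → 3 ≤ G.degree z) :
    HasMinor G (⊤ : SimpleGraph (Fin 4)) := by
  classical
  set S : Set V := {β, p, q} with hSdef
  have hmemS : ∀ w, w ∈ S ↔ (w = β ∨ w = p ∨ w = q) := fun w => by simp [hSdef]
  have hβS : β ∈ S := (hmemS β).2 (Or.inl rfl)
  have hpS : p ∈ S := (hmemS p).2 (Or.inr (Or.inl rfl))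
  have hqS : q ∈ S := (hmemS q).2 (Or.inr (Or.inr rfl))
  have hxS : x ∉ S := by
    rw [hmemS]
    rintro (h | h | h)
    exacts [hxβ h, hpx.ne' h, hxq h]
  have hyS : y ∉ S := by
    rw [hmemS]
    rintro (h | h | h)
    exacts [hyβ h, hyp h, hqy.ne' h]
  have hSconn : (G.induce S).Connected := by
    have h1 : (G.induce ({β, p} ∪ {q} : Set V)).Connected :=
      connected_induce_union (induce_pair_connected_of_adj (by exact hβp)).preconnected
        (induce_singleton_connected G q).preconnected (by simp) (by simp) hβq
    have h2 : ({β, p} ∪ {q} : Set V) = S := by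
      ext w; simp [hSdef]; tauto
    rw [h2] at h1
    exact h1
  apply hasMinor_of_quot G S β hβS hSconn
  letI : DecidableRel (quotG G S β).Adj := Classical.decRel _
  refine ih (quotG G S β) (rq S β) ?_ ?_ ?_
  · have h1 : Fintype.card (Qt S β) < Fintype.card V := card_Qt_lt S β p hpS hβp.ne'
    omega
  · refine le_trans ?_ (quot_deg_rq G S β hβS {x} ?_ ?_)
    · simp
    · intro w hw
      rw [Finset.mem_singleton] at hw
      subst hw; exact hxS
    · intro w hw
      rw [Finset.mem_singleton] at hw
      subst hw; exact ⟨p, hpS, hpx⟩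
  · intro z hz
    have hzS : z.val ∉ S := by
      rcases z.2 with h | h
      · exact h
      · exact absurd (Subtype.ext h) hz
    have hzβ : z.val ≠ β := fun h => hzS ((hmemS _).2 (Or.inl h))
    have hzp : z.val ≠ p := fun h => hzS ((hmemS _).2 (Or.inr (Or.inl h)))
    have hzq : z.val ≠ q := fun h => hzS ((hmemS _).2 (Or.inr (Or.inr h)))
    have hdegz := hgood z.val hzβ
    have hnadjβ : ¬ G.Adj z.val β := fun h => by
      rcases hNβ z.val h.symm with h' | h'
      exacts [hzp h', hzq h']
    by_cases hzx : z.val = x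
    · -- z = x : neighbors minus p
      set t := (G.neighborFinset z.val).erase p with ht
      have hpmem : p ∈ G.neighborFinset z.val := by
        rw [SimpleGraph.mem_neighborFinset, hzx]; exact hpx.symm
      have hcardt : t.card = G.degree z.val - 1 := by
        rw [ht, Finset.card_erase_of_mem hpmem, SimpleGraph.card_neighborFinset_eq_degree]
      have h3 : 3 ≤ t.card + 1 := by omega
      refine le_trans h3 (quot_deg_ge2 G S β z hzS hβS t ?_ ?_ p hpS
        (by rw [hzx]; exact hpx.symm))
      · intro w hw
        rw [ht, Finset.mem_erase, SimpleGraph.mem_neighborFinset] at hw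
        rw [hmemS]
        rintro (h | h | h)
        · exact hnadjβ (h ▸ hw.2)
        · exact hw.1 h
        · -- w = q : then Adj x q, so x ∈ {β,p,y}
          subst h
          rcases hNq z.val hw.2.symm with h' | h' | h'
          exacts [hzβ h', hzp h', hxy (hzx.symm.trans h')]
      · intro w hw
        rw [ht, Finset.mem_erase, SimpleGraph.mem_neighborFinset] at hw
        exact hw.2
    · by_cases hzy : z.val = y
      · set t := (G.neighborFinset z.val).erase q with ht
        have hqmem : q ∈ G.neighborFinset z.val := by
          rw [SimpleGraph.mem_neighborFinset, hzy]; exact hqy.symm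
        have hcardt : t.card = G.degree z.val - 1 := by
          rw [ht, Finset.card_erase_of_mem hqmem, SimpleGraph.card_neighborFinset_eq_degree]
        have h3 : 3 ≤ t.card + 1 := by omega
        refine le_trans h3 (quot_deg_ge2 G S β z hzS hβS t ?_ ?_ q hqS
          (by rw [hzy]; exact hqy.symm))
        · intro w hw
          rw [ht, Finset.mem_erase, SimpleGraph.mem_neighborFinset] at hw
          rw [hmemS]
          rintro (h | h | h)
          · exact hnadjβ (h ▸ hw.2)
          · subst h
            rcases hNp z.val hw.2.symm with h' | h' | h'
            exacts [hzβ h', hzq h', hxy (h'.symm.trans hzy)]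
          · exact hw.1 h
        · intro w hw
          rw [ht, Finset.mem_erase, SimpleGraph.mem_neighborFinset] at hw
          exact hw.2
      · refine le_trans ?_ (quot_deg_ge1 G S β z (G.neighborFinset z.val) ?_ ?_)
        · rw [SimpleGraph.card_neighborFinset_eq_degree]; exact hdegz
        · intro w hw
          rw [SimpleGraph.mem_neighborFinset] at hw
          rw [hmemS]
          rintro (h | h | h)
          · exact hnadjβ (h ▸ hw)
          · subst h
            rcases hNp z.val hw.symm with h' | h' | h'
            exacts [hzβ h', hzq h', hzx h']
          · subst h
            rcases hNq z.val hw.symm with h' | h' | h'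
            exacts [hzβ h', hzp h', hzy h']
        · intro w hw
          rw [SimpleGraph.mem_neighborFinset] at hw
          exact hw
end Steps2

section Steps3
set_option linter.unusedSectionVars false
variable {V : Type u} [Fintype V] (G : SimpleGraph V) [DecidableRel G.Adj]

lemma tail_set {s : Set V} (a c : ↥s) (hne : a ≠ c) (h : (G.induce s).Reachable a c) :
    ∃ D : Set V, (G.induce D).Connected ∧ (∀ w ∈ D, w ∈ s) ∧ c.val ∈ D ∧ a.val ∉ D ∧
      ∃ d ∈ D, G.Adj a.val d := by
  classical
  obtain ⟨p0⟩ := h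
  obtain ⟨q, hq⟩ := p0.toPath
  cases q with
  | nil => exact absurd rfl hne
  | @cons _ b _ hadj q' =>
    rw [SimpleGraph.Walk.cons_isPath_iff] at hq
    refine ⟨Subtype.val '' {x | x ∈ q'.support}, ?_, ?_, ?_, ?_, ?_⟩
    · exact induce_image_connected G s _ q'.connected_induce_support
    · rintro w ⟨x, hx, rfl⟩
      exact x.2
    · exact ⟨c, q'.end_mem_support, rfl⟩
    · rintro ⟨x, hx, hxa⟩
      have : x = a := Subtype.val_injective hxa
      exact hq.2 (this ▸ hx)
    · exact ⟨b.val, ⟨b, q'.start_mem_support, rfl⟩, by exact hadj⟩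

lemma LB_step (n : ℕ) (ih : TTstmt.{u} n) (v p m r : V)
    (hcard : Fintype.card V ≤ n + 1)
    (hvp : G.Adj v p) (hvm : G.Adj v m) (hvr : G.Adj v r)
    (hNv : ∀ w, G.Adj v w → w = p ∨ w = m ∨ w = r)
    (hpm : G.Adj p m) (hmr : G.Adj m r) (hpr : ¬ G.Adj p r) (hpr' : p ≠ r)
    (hall : ∀ y, 3 ≤ G.degree y) :
    HasMinor G (⊤ : SimpleGraph (Fin 4)) := by
  classical
  by_cases hm4 : 4 ≤ G.degree m
  · refine pair_step G n ih v p hvp hcard (fun y _ _ => hall y) ?_ {m} ?_ ?_ ?_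
    · intro y hyv hyp hyadjv hyadjp
      rcases hNv y hyadjv.symm with h | h | h
      · exact absurd h hyp
      · exact h ▸ hm4
      · exact absurd (h ▸ hyadjp) (fun hh => hpr hh.symm)
    · intro w hw
      rw [Finset.mem_singleton] at hw
      subst hw
      exact ⟨hvm.ne', hpm.ne'⟩
    · intro w hw
      rw [Finset.mem_singleton] at hw
      subst hw
      exact Or.inl hvm
    · simp
  · have hm3 : G.degree m = 3 := by have := hall m; omega
    have hNm : ∀ w, G.Adj m w → w = v ∨ w = p ∨ w = r := by
      have hsub : ∀ w ∈ ({v, p, r} : Finset V), G.Adj m w := by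
        intro w hw
        simp only [Finset.mem_insert, Finset.mem_singleton] at hw
        rcases hw with rfl | rfl | rfl
        exacts [hvm.symm, hpm.symm, hmr]
      have hcard3 : ({v, p, r} : Finset V).card = 3 := by
        rw [Finset.card_insert_of_notMem (by simp [hvp.ne, hvr.ne]),
          Finset.card_insert_of_notMem (by simp [hpr']), Finset.card_singleton]
      have := nbhd_eq G m {v, p, r} hsub (by omega)
      intro w hw
      have h2 := this w hw
      simpa using h2
    set s : Set V := {w | w ≠ v ∧ w ≠ m} with hsdef
    have hps : p ∈ s := ⟨hvp.ne', hpm.ne⟩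
    have hrs : r ∈ s := ⟨hvr.ne', hmr.ne'⟩
    by_cases hreach : (G.induce s).Reachable ⟨p, hps⟩ ⟨r, hrs⟩
    · obtain ⟨D, hDconn, hDs, hrD, hpD, d, hdD, hpd⟩ :=
        tail_set G (⟨p, hps⟩ : ↥s) ⟨r, hrs⟩ (fun hh => hpr' (congrArg Subtype.val hh)) hreach
      refine hasMinor_K4_explicit G {v} {m} {p} D
        (induce_singleton_connected G v) (induce_singleton_connected G m)
        (induce_singleton_connected G p) hDconn
        ?_ ?_ ?_ ?_ ?_ ?_ ?_ ?_ ?_ ?_ ?_ ?_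
      · rw [Set.disjoint_singleton_left]; simp [hvm.ne]
      · rw [Set.disjoint_singleton_left]; simp [hvp.ne]
      · rw [Set.disjoint_singleton_left]; exact fun h => (hDs v h).1 rfl
      · rw [Set.disjoint_singleton_left]; simp [hpm.ne']
      · rw [Set.disjoint_singleton_left]; exact fun h => (hDs m h).2 rfl
      · rw [Set.disjoint_singleton_left]; exact hpD
      · exact ⟨v, rfl, m, rfl, hvm⟩
      · exact ⟨v, rfl, p, rfl, hvp⟩
      · exact ⟨v, rfl, r, hrD, hvr⟩
      · exact ⟨m, rfl, p, rfl, hpm.symm⟩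
      · exact ⟨m, rfl, r, hrD, hmr⟩
      · exact ⟨p, rfl, d, hdD, hpd⟩
    · set Cp : Set V := {w | ∃ h : w ∈ s, (G.induce s).Reachable ⟨w, h⟩ ⟨p, hps⟩} with hCpdef
      have hpCp : p ∈ Cp := ⟨hps, Reachable.refl _⟩
      have hrCp : r ∉ Cp := fun ⟨hr2, hre⟩ => hreach (hre.symm)
      have hvCp : v ∉ Cp := fun ⟨hv2, _⟩ => hv2.1 rfl
      have hmCp : m ∉ Cp := fun ⟨hm2, _⟩ => hm2.2 rfl
      have hext : ∀ u w, u ∈ Cp → w ∈ s → G.Adj u w → w ∈ Cp := by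
        rintro u w ⟨hus, hru⟩ hws hadj
        exact ⟨hws, (SimpleGraph.Adj.reachable
          (by exact hadj.symm : (G.induce s).Adj ⟨w, hws⟩ ⟨u, hus⟩)).trans hru⟩
      -- neighbours of non-p vertices of Cp stay in Cp
      have hnbr : ∀ u, u ∈ Cp → u ≠ p → ∀ w, G.Adj u w → w ∈ Cp := by
        intro u huCp hup w hadj
        have hus := huCp.1
        have hwv : w ≠ v := by
          rintro rfl
          rcases hNv u hadj.symm with h | h | h
          · exact hup h
          · exact hus.2 h
          · exact hrCp (h ▸ huCp)
        have hwm : w ≠ m := by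
          rintro rfl
          rcases hNm u hadj.symm with h | h | h
          · exact hus.1 h
          · exact hup h
          · exact hrCp (h ▸ huCp)
        exact hext u w huCp ⟨hwv, hwm⟩ hadj
      refine del_step G n ih Cp v hvCp hcard ⟨p, hpCp⟩ ?_ ?_
      · intro instF instD
        have hvmem : v ∈ G.neighborFinset p := by
          rw [SimpleGraph.mem_neighborFinset]; exact hvp.symm
        have hmmem : m ∈ (G.neighborFinset p).erase v := by
          rw [Finset.mem_erase, SimpleGraph.mem_neighborFinset]
          exact ⟨hvm.ne', hpm⟩
        set t := ((G.neighborFinset p).erase v).erase m with ht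
        have hcardt : t.card = G.degree p - 2 := by
          rw [ht, Finset.card_erase_of_mem hmmem, Finset.card_erase_of_mem hvmem,
            SimpleGraph.card_neighborFinset_eq_degree]
          omega
        have h1 : 1 ≤ t.card := by have := hall p; omega
        refine le_trans h1 (induce_degree_ge G Cp ⟨p, hpCp⟩ t ?_ ?_)
        · intro w hw
          rw [ht, Finset.mem_erase, Finset.mem_erase, SimpleGraph.mem_neighborFinset] at hw
          exact hext p w hpCp ⟨hw.2.1, hw.1⟩ hw.2.2
        · intro w hw
          rw [ht, Finset.mem_erase, Finset.mem_erase, SimpleGraph.mem_neighborFinset] at hw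
          exact hw.2.2
      · intro instF instD y hy
        have hyp : y.val ≠ p := fun h => hy (Subtype.ext h)
        refine le_trans ?_ (induce_degree_ge G Cp y (G.neighborFinset y.val) ?_ ?_)
        · rw [SimpleGraph.card_neighborFinset_eq_degree]; exact hall y.val
        · intro w hw
          rw [SimpleGraph.mem_neighborFinset] at hw
          exact hnbr y.val y.2 hyp w hw
        · intro w hw
          rw [SimpleGraph.mem_neighborFinset] at hw
          exact hw
end Steps3

section Steps4
set_option linter.unusedSectionVars false
variable {V : Type u} [Fintype V] (G : SimpleGraph V) [DecidableRel G.Adj]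

lemma base4 (hc : Fintype.card V = 4) (alladj : ∀ u w : V, u ≠ w → G.Adj u w) :
    HasMinor G (⊤ : SimpleGraph (Fin 4)) := by
  classical
  set e := (Fintype.equivFinOfCardEq hc).symm with he
  have hinj : Function.Injective e := e.injective
  have hne : ∀ i j : Fin 4, i ≠ j → e i ≠ e j := fun i j hij h => hij (hinj h)
  refine hasMinor_K4_explicit G {e 0} {e 1} {e 2} {e 3}
    (induce_singleton_connected G _) (induce_singleton_connected G _)
    (induce_singleton_connected G _) (induce_singleton_connected G _)
    ?_ ?_ ?_ ?_ ?_ ?_ ?_ ?_ ?_ ?_ ?_ ?_ <;>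
  first
    | (rw [Set.disjoint_singleton_left]; simp only [Set.mem_singleton_iff]
       apply hne; decide)
    | exact ⟨e 0, rfl, e 1, rfl, alladj _ _ (hne 0 1 (by decide))⟩
    | exact ⟨e 0, rfl, e 2, rfl, alladj _ _ (hne 0 2 (by decide))⟩
    | exact ⟨e 0, rfl, e 3, rfl, alladj _ _ (hne 0 3 (by decide))⟩
    | exact ⟨e 1, rfl, e 2, rfl, alladj _ _ (hne 1 2 (by decide))⟩
    | exact ⟨e 1, rfl, e 3, rfl, alladj _ _ (hne 1 3 (by decide))⟩
    | exact ⟨e 2, rfl, e 3, rfl, alladj _ _ (hne 2 3 (by decide))⟩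
end Steps4

theorem TT : ∀ n : ℕ, TTstmt.{u} n := by
  intro n
  induction n with
  | zero =>
    intro V' _ G' _ β' hcard _ _
    exact absurd hcard (by have := Fintype.card_pos_iff.2 ⟨β'⟩; omega)
  | succ n ih =>
    intro V instF G instD β hcard hdegβ hgood
    classical
    -- β has a neighbour u
    have hnbβ : 0 < (G.neighborFinset β).card := by
      rw [SimpleGraph.card_neighborFinset_eq_degree]; omega
    obtain ⟨u, hu⟩ := Finset.card_pos.1 hnbβ
    have hβu : G.Adj β u := (SimpleGraph.mem_neighborFinset G β u).1 hu
    have huβ : u ≠ β := hβu.ne'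
    have h4 : 4 ≤ Fintype.card V := card_ge_four G u (hgood u huβ)
    by_cases hc5 : 5 ≤ Fintype.card V
    swap
    · -- card = 4 : complete graph
      have hc4 : Fintype.card V = 4 := by omega
      have halladj1 : ∀ z w, z ≠ β → z ≠ w → G.Adj z w := by
        intro z w hzβ hzw
        have h3 := hgood z hzβ
        have hsub : G.neighborFinset z ⊆ Finset.univ.erase z := by
          intro w' hw'
          rw [Finset.mem_erase]
          exact ⟨((SimpleGraph.mem_neighborFinset G z w').1 hw').ne', Finset.mem_univ _⟩
        have hce : (Finset.univ.erase z).card = 3 := by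
          rw [Finset.card_erase_of_mem (Finset.mem_univ z), Finset.card_univ, hc4]
        have heq := Finset.eq_of_subset_of_card_le hsub
          (by rw [hce, SimpleGraph.card_neighborFinset_eq_degree]; exact h3)
        have hwmem : w ∈ Finset.univ.erase z := by
          rw [Finset.mem_erase]; exact ⟨fun h => hzw h.symm, Finset.mem_univ _⟩
        rw [← heq] at hwmem
        exact (SimpleGraph.mem_neighborFinset G z w).1 hwmem
      refine base4 G hc4 ?_
      intro z w hzw
      by_cases hzβ : z = β
      · subst hzβ
        exact (halladj1 w z (fun h => hzw h.symm) (fun h => hzw h.symm)).symm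
      · exact halladj1 z w hzβ hzw
    -- card ≥ 5
    by_cases hβ3 : 3 ≤ G.degree β
    · -- minimum degree at least 3 everywhere
      have hall : ∀ y, 3 ≤ G.degree y := by
        intro y
        by_cases h : y = β
        · exact h ▸ hβ3
        · exact hgood y h
      obtain ⟨v, -, hvmin⟩ := Finset.exists_min_image (Finset.univ : Finset V)
        (fun y => G.degree y) ⟨β, Finset.mem_univ β⟩
      by_cases hv4 : 4 ≤ G.degree v
      · -- min degree ≥ 4 : contract any edge
        have hall4 : ∀ y, 4 ≤ G.degree y := fun y => le_trans hv4 (hvmin y (Finset.mem_univ y))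
        have hnbv : 0 < (G.neighborFinset v).card := by
          rw [SimpleGraph.card_neighborFinset_eq_degree]; have := hall4 v; omega
        obtain ⟨a, ha⟩ := Finset.card_pos.1 hnbv
        have hva : G.Adj v a := (SimpleGraph.mem_neighborFinset G v a).1 ha
        have hnbv2 : 0 < ((G.neighborFinset v).erase a).card := by
          rw [Finset.card_erase_of_mem ha, SimpleGraph.card_neighborFinset_eq_degree]
          have := hall4 v; omega
        obtain ⟨w, hw⟩ := Finset.card_pos.1 hnbv2
        rw [Finset.mem_erase, SimpleGraph.mem_neighborFinset] at hw
        refine pair_step G n ih v a hva hcard (fun y _ _ => hall y)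
          (fun y _ _ _ _ => hall4 y) {w} ?_ ?_ ?_
        · intro w' hw'
          rw [Finset.mem_singleton] at hw'
          subst hw'
          exact ⟨hw.2.ne', hw.1⟩
        · intro w' hw'
          rw [Finset.mem_singleton] at hw'
          subst hw'
          exact Or.inl hw.2
        · simp
      · have hv3 : G.degree v = 3 := by have := hall v; omega
        obtain ⟨a, b, c, hab', hac', hbc', hN⟩ := Finset.card_eq_three.1
          (show (G.neighborFinset v).card = 3 by
            rw [SimpleGraph.card_neighborFinset_eq_degree]; exact hv3)
        have hva : G.Adj v a := (SimpleGraph.mem_neighborFinset G v a).1 (by rw [hN]; simp)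
        have hvb : G.Adj v b := (SimpleGraph.mem_neighborFinset G v b).1 (by rw [hN]; simp)
        have hvc : G.Adj v c := (SimpleGraph.mem_neighborFinset G v c).1 (by rw [hN]; simp)
        have hNv : ∀ w, G.Adj v w → w = a ∨ w = b ∨ w = c := by
          intro w hw
          have : w ∈ G.neighborFinset v := (SimpleGraph.mem_neighborFinset G v w).2 hw
          rw [hN] at this
          simpa using this
        by_cases hab : G.Adj a b <;> by_cases hac : G.Adj a c <;> by_cases hbc : G.Adj b c
        · -- triangle : K4 subgraph
          refine hasMinor_K4_explicit G {v} {a} {b} {c}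
            (induce_singleton_connected G _) (induce_singleton_connected G _)
            (induce_singleton_connected G _) (induce_singleton_connected G _)
            ?_ ?_ ?_ ?_ ?_ ?_ ?_ ?_ ?_ ?_ ?_ ?_
          · rw [Set.disjoint_singleton_left]; simp [hva.ne]
          · rw [Set.disjoint_singleton_left]; simp [hvb.ne]
          · rw [Set.disjoint_singleton_left]; simp [hvc.ne]
          · rw [Set.disjoint_singleton_left]; simp [hab']
          · rw [Set.disjoint_singleton_left]; simp [hac']
          · rw [Set.disjoint_singleton_left]; simp [hbc']
          · exact ⟨v, rfl, a, rfl, hva⟩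
          · exact ⟨v, rfl, b, rfl, hvb⟩
          · exact ⟨v, rfl, c, rfl, hvc⟩
          · exact ⟨a, rfl, b, rfl, hab⟩
          · exact ⟨a, rfl, c, rfl, hac⟩
          · exact ⟨b, rfl, c, rfl, hbc⟩
        · -- edges ab, ac : path b-a-c
          refine LB_step G n ih v b a c hcard hvb hva hvc ?_ hab.symm hac hbc hbc' hall
          intro w hw
          rcases hNv w hw with h | h | h
          exacts [Or.inr (Or.inl h), Or.inl h, Or.inr (Or.inr h)]
        · -- edges ab, bc : path a-b-c
          refine LB_step G n ih v a b c hcard hva hvb hvc hNv hab hbc hac hac' hall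
        · -- only edge ab : c isolated among {a,b}
          refine pair_step G n ih v c hvc hcard (fun y _ _ => hall y) ?_ {a} ?_ ?_ ?_
          · intro y hyv hyc hadjv hadjc
            rcases hNv y hadjv.symm with h | h | h
            · exact absurd (h ▸ hadjc) hac
            · exact absurd (h ▸ hadjc) hbc
            · exact absurd h hyc
          · intro w' hw'
            rw [Finset.mem_singleton] at hw'
            subst hw'
            exact ⟨hva.ne', hac'⟩
          · intro w' hw'
            rw [Finset.mem_singleton] at hw'
            subst hw'
            exact Or.inl hva
          · simp
        · -- edges ac, bc : path a-c-b
          refine LB_step G n ih v a c b hcard hva hvc hvb ?_ hac hbc.symm hab hab' hall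
          intro w hw
          rcases hNv w hw with h | h | h
          exacts [Or.inl h, Or.inr (Or.inr h), Or.inr (Or.inl h)]
        · -- only edge ac : b isolated
          refine pair_step G n ih v b hvb hcard (fun y _ _ => hall y) ?_ {a} ?_ ?_ ?_
          · intro y hyv hyb hadjv hadjb
            rcases hNv y hadjv.symm with h | h | h
            · exact absurd (h ▸ hadjb) hab
            · exact absurd h hyb
            · exact absurd (h ▸ hadjb) (fun hh => hbc hh.symm)
          · intro w' hw'
            rw [Finset.mem_singleton] at hw'
            subst hw'
            exact ⟨hva.ne', hab'⟩
          · intro w' hw'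
            rw [Finset.mem_singleton] at hw'
            subst hw'
            exact Or.inl hva
          · simp
        · -- only edge bc : a isolated
          refine pair_step G n ih v a hva hcard (fun y _ _ => hall y) ?_ {b} ?_ ?_ ?_
          · intro y hyv hya hadjv hadja
            rcases hNv y hadjv.symm with h | h | h
            · exact absurd h hya
            · exact absurd (h ▸ hadja) (fun hh => hab hh.symm)
            · exact absurd (h ▸ hadja) (fun hh => hac hh.symm)
          · intro w' hw'
            rw [Finset.mem_singleton] at hw'
            subst hw'
            exact ⟨hvb.ne', fun h => hab' h.symm⟩
          · intro w' hw'
            rw [Finset.mem_singleton] at hw'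
            subst hw'
            exact Or.inl hvb
          · simp
        · -- no edges : a isolated
          refine pair_step G n ih v a hva hcard (fun y _ _ => hall y) ?_ {b} ?_ ?_ ?_
          · intro y hyv hya hadjv hadja
            rcases hNv y hadjv.symm with h | h | h
            · exact absurd h hya
            · exact absurd (h ▸ hadja) (fun hh => hab hh.symm)
            · exact absurd (h ▸ hadja) (fun hh => hac hh.symm)
          · intro w' hw'
            rw [Finset.mem_singleton] at hw'
            subst hw'
            exact ⟨hvb.ne', fun h => hab' h.symm⟩
          · intro w' hw'
            rw [Finset.mem_singleton] at hw'
            subst hw'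
            exact Or.inl hvb
          · simp
    · by_cases hβ2 : 2 ≤ G.degree β
      · -- degree β = 2
        have hd2 : G.degree β = 2 := by omega
        obtain ⟨p, q, hpqne, hNβ⟩ := Finset.card_eq_two.1
          (show (G.neighborFinset β).card = 2 by
            rw [SimpleGraph.card_neighborFinset_eq_degree]; exact hd2)
        have hβp : G.Adj β p := (SimpleGraph.mem_neighborFinset G β p).1 (by rw [hNβ]; simp)
        have hβq : G.Adj β q := (SimpleGraph.mem_neighborFinset G β q).1 (by rw [hNβ]; simp)
        have hNβ' : ∀ w, G.Adj β w → w = p ∨ w = q := by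
          intro w hw
          have : w ∈ G.neighborFinset β := (SimpleGraph.mem_neighborFinset G β w).2 hw
          rw [hNβ] at this
          simpa using this
        by_cases hpq : G.Adj p q
        · by_cases hq4 : 4 ≤ G.degree q
          · refine pair_step G n ih β p hβp hcard (fun y hy _ => hgood y hy) ?_ {q} ?_ ?_ ?_
            · intro y hyβ hyp hadjβ hadjp
              rcases hNβ' y hadjβ.symm with h | h
              · exact absurd h hyp
              · exact h ▸ hq4
            · intro w' hw'
              rw [Finset.mem_singleton] at hw'
              subst hw'
              exact ⟨hβq.ne', hpqne.symm⟩
            · intro w' hw'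
              rw [Finset.mem_singleton] at hw'
              subst hw'
              exact Or.inl hβq
            · simp
          · by_cases hp4 : 4 ≤ G.degree p
            · refine pair_step G n ih β q hβq hcard (fun y hy _ => hgood y hy) ?_ {p} ?_ ?_ ?_
              · intro y hyβ hyq hadjβ hadjq
                rcases hNβ' y hadjβ.symm with h | h
                · exact h ▸ hp4
                · exact absurd h hyq
              · intro w' hw'
                rw [Finset.mem_singleton] at hw'
                subst hw'
                exact ⟨hβp.ne', hpqne⟩
              · intro w' hw'
                rw [Finset.mem_singleton] at hw'
                subst hw'
                exact Or.inl hβp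
              · simp
            · -- both p, q have degree exactly 3
              have hp3 : G.degree p = 3 := by
                have := hgood p hβp.ne'; omega
              have hq3 : G.degree q = 3 := by
                have := hgood q hβq.ne'; omega
              -- third neighbour x of p
              have hβmemp : β ∈ G.neighborFinset p := by
                rw [SimpleGraph.mem_neighborFinset]; exact hβp.symm
              have hqmemp : q ∈ (G.neighborFinset p).erase β := by
                rw [Finset.mem_erase, SimpleGraph.mem_neighborFinset]
                exact ⟨hβq.ne', hpq⟩
              have hcx : (((G.neighborFinset p).erase β).erase q).card = 1 := by
                rw [Finset.card_erase_of_mem hqmemp, Finset.card_erase_of_mem hβmemp,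
                  SimpleGraph.card_neighborFinset_eq_degree, hp3]
              obtain ⟨x, hx⟩ := Finset.card_eq_one.1 hcx
              have hxmem : x ∈ ((G.neighborFinset p).erase β).erase q := by rw [hx]; simp
              rw [Finset.mem_erase, Finset.mem_erase, SimpleGraph.mem_neighborFinset] at hxmem
              obtain ⟨hxq, hxβ, hpx⟩ := hxmem
              -- third neighbour y of q
              have hβmemq : β ∈ G.neighborFinset q := by
                rw [SimpleGraph.mem_neighborFinset]; exact hβq.symm
              have hpmemq : p ∈ (G.neighborFinset q).erase β := by
                rw [Finset.mem_erase, SimpleGraph.mem_neighborFinset]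
                exact ⟨hβp.ne', hpq.symm⟩
              have hcy : (((G.neighborFinset q).erase β).erase p).card = 1 := by
                rw [Finset.card_erase_of_mem hpmemq, Finset.card_erase_of_mem hβmemq,
                  SimpleGraph.card_neighborFinset_eq_degree, hq3]
              obtain ⟨y, hy⟩ := Finset.card_eq_one.1 hcy
              have hymem : y ∈ ((G.neighborFinset q).erase β).erase p := by rw [hy]; simp
              rw [Finset.mem_erase, Finset.mem_erase, SimpleGraph.mem_neighborFinset] at hymem
              obtain ⟨hyp, hyβ, hqy⟩ := hymem
              -- full neighbourhoods of p and q
              have hNp : ∀ w, G.Adj p w → w = β ∨ w = q ∨ w = x := by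
                have hsub : ∀ w ∈ ({β, q, x} : Finset V), G.Adj p w := by
                  intro w hw
                  simp only [Finset.mem_insert, Finset.mem_singleton] at hw
                  rcases hw with rfl | rfl | rfl
                  exacts [hβp.symm, hpq, hpx]
                have hcard3 : ({β, q, x} : Finset V).card = 3 := by
                  rw [Finset.card_insert_of_notMem (by simp [hβq.ne, Ne.symm hxβ]),
                    Finset.card_insert_of_notMem (by simp [Ne.symm hxq]),
                    Finset.card_singleton]
                have := nbhd_eq G p {β, q, x} hsub (by omega)
                intro w hw
                have h2 := this w hw
                simpa using h2
              have hNq : ∀ w, G.Adj q w → w = β ∨ w = p ∨ w = y := by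
                have hsub : ∀ w ∈ ({β, p, y} : Finset V), G.Adj q w := by
                  intro w hw
                  simp only [Finset.mem_insert, Finset.mem_singleton] at hw
                  rcases hw with rfl | rfl | rfl
                  exacts [hβq.symm, hpq.symm, hqy]
                have hcard3 : ({β, p, y} : Finset V).card = 3 := by
                  rw [Finset.card_insert_of_notMem (by simp [hβp.ne, Ne.symm hyβ]),
                    Finset.card_insert_of_notMem (by simp [Ne.symm hyp]),
                    Finset.card_singleton]
                have := nbhd_eq G q {β, p, y} hsub (by omega)
                intro w hw
                have h2 := this w hw
                simpa using h2
              by_cases hxy : x = y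
              · -- delete the triangle {β, p, q}; bad vertex x
                subst hxy
                set s : Set V := {w | w ≠ β ∧ w ≠ p ∧ w ≠ q} with hsdef
                have hxs : x ∈ s := ⟨hxβ, hpx.ne', hxq⟩
                refine del_step G n ih s β (fun h => h.1 rfl) hcard ⟨x, hxs⟩ ?_ ?_
                · intro instF2 instD2
                  have hpmem : p ∈ G.neighborFinset x := by
                    rw [SimpleGraph.mem_neighborFinset]; exact hpx.symm
                  have hqmem : q ∈ (G.neighborFinset x).erase p := by
                    rw [Finset.mem_erase, SimpleGraph.mem_neighborFinset]
                    exact ⟨hpqne.symm, hqy.symm⟩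
                  set t := ((G.neighborFinset x).erase p).erase q with ht
                  have hcardt : t.card = G.degree x - 2 := by
                    rw [ht, Finset.card_erase_of_mem hqmem, Finset.card_erase_of_mem hpmem,
                      SimpleGraph.card_neighborFinset_eq_degree]
                    omega
                  have h1 : 1 ≤ t.card := by
                    have := hgood x hxβ; omega
                  refine le_trans h1 (induce_degree_ge G s ⟨x, hxs⟩ t ?_ ?_)
                  · intro w hw
                    rw [ht, Finset.mem_erase, Finset.mem_erase,
                      SimpleGraph.mem_neighborFinset] at hw
                    refine ⟨?_, hw.2.1, hw.1⟩
                    rintro rfl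
                    rcases hNβ' x hw.2.2.symm with h | h
                    exacts [hpx.ne' h, hxq h]
                  · intro w hw
                    rw [ht, Finset.mem_erase, Finset.mem_erase,
                      SimpleGraph.mem_neighborFinset] at hw
                    exact hw.2.2
                · intro instF2 instD2 z hz
                  have hzx : z.val ≠ x := fun h => hz (Subtype.ext h)
                  have hzs := z.2
                  refine le_trans ?_ (induce_degree_ge G s z (G.neighborFinset z.val) ?_ ?_)
                  · rw [SimpleGraph.card_neighborFinset_eq_degree]
                    exact hgood z.val hzs.1
                  · intro w hw
                    rw [SimpleGraph.mem_neighborFinset] at hw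
                    refine ⟨?_, ?_, ?_⟩
                    · rintro rfl
                      rcases hNβ' z.val hw.symm with h | h
                      exacts [hzs.2.1 h, hzs.2.2 h]
                    · rintro rfl
                      rcases hNp z.val hw.symm with h | h | h
                      exacts [hzs.1 h, hzs.2.2 h, hzx h]
                    · rintro rfl
                      rcases hNq z.val hw.symm with h | h | h
                      exacts [hzs.1 h, hzs.2.1 h, hzx h]
                  · intro w hw
                    rw [SimpleGraph.mem_neighborFinset] at hw
                    exact hw
              · exact tri_step G n ih β p q x y hcard hβp hβq hpq hNβ' hNp hpx hNq hqy
                  hxy hxβ hxq hyβ hyp (fun z hz => hgood z hz)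
        · -- p, q not adjacent : contract β into p
          refine pair_step G n ih β p hβp hcard (fun y hy _ => hgood y hy) ?_ {q} ?_ ?_ ?_
          · intro y hyβ hyp hadjβ hadjp
            rcases hNβ' y hadjβ.symm with h | h
            · exact absurd h hyp
            · exact absurd (h ▸ hadjp) (fun hh => hpq hh.symm)
          · intro w' hw'
            rw [Finset.mem_singleton] at hw'
            subst hw'
            exact ⟨hβq.ne', hpqne.symm⟩
          · intro w' hw'
            rw [Finset.mem_singleton] at hw'
            subst hw'
            exact Or.inl hβq
          · simp
      · -- degree β = 1
        have hd1 : G.degree β = 1 := by omega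
        obtain ⟨u0, hu0⟩ := Finset.card_eq_one.1
          (show (G.neighborFinset β).card = 1 by
            rw [SimpleGraph.card_neighborFinset_eq_degree]; exact hd1)
        have hβu0 : G.Adj β u0 := (SimpleGraph.mem_neighborFinset G β u0).1 (by rw [hu0]; simp)
        have hNβ1 : ∀ w, G.Adj β w → w = u0 := by
          intro w hw
          have : w ∈ G.neighborFinset β := (SimpleGraph.mem_neighborFinset G β w).2 hw
          rw [hu0] at this
          simpa using this
        set s : Set V := {w | w ≠ β} with hsdef
        have hu0s : u0 ∈ s := hβu0.ne'
        refine del_step G n ih s β (fun h => h rfl) hcard ⟨u0, hu0s⟩ ?_ ?_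
        · intro instF2 instD2
          have hβmem : β ∈ G.neighborFinset u0 := by
            rw [SimpleGraph.mem_neighborFinset]; exact hβu0.symm
          set t := (G.neighborFinset u0).erase β with ht
          have hcardt : t.card = G.degree u0 - 1 := by
            rw [ht, Finset.card_erase_of_mem hβmem, SimpleGraph.card_neighborFinset_eq_degree]
          have h1 : 1 ≤ t.card := by
            have := hgood u0 hβu0.ne'; omega
          refine le_trans h1 (induce_degree_ge G s ⟨u0, hu0s⟩ t ?_ ?_)
          · intro w hw
            rw [ht, Finset.mem_erase] at hw
            exact hw.1
          · intro w hw
            rw [ht, Finset.mem_erase, SimpleGraph.mem_neighborFinset] at hw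
            exact hw.2
        · intro instF2 instD2 z hz
          refine le_trans ?_ (induce_degree_ge G s z (G.neighborFinset z.val) ?_ ?_)
          · rw [SimpleGraph.card_neighborFinset_eq_degree]
            exact hgood z.val z.2
          · intro w hw
            rw [SimpleGraph.mem_neighborFinset] at hw
            rintro rfl
            have := hNβ1 z.val hw.symm
            exact hz (Subtype.ext this)
          · intro w hw
            rw [SimpleGraph.mem_neighborFinset] at hw
            exact hw

section Degeneracy
set_option linter.unusedSectionVars false
variable {V : Type u} [Fintype V]

lemma exists_low_deg (G : SimpleGraph V) [DecidableRel G.Adj] [Nonempty V]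
    (hK4 : ¬ HasMinor G (⊤ : SimpleGraph (Fin 4))) : ∃ v, G.degree v ≤ 2 := by
  by_contra h
  push_neg at h
  refine hK4 (TT (Fintype.card V) G (Classical.arbitrary V) le_rfl ?_ ?_)
  · have := h (Classical.arbitrary V); omega
  · intro y _
    have := h y; omega

lemma mem_Mset3 (x : ℤ) (h : x = 0 ∨ x = 1 ∨ x = -1) : x ∈ Mset 3 := by
  rcases h with rfl | rfl | rfl <;> constructor <;> simp

theorem colorable3 : ∀ (n : ℕ) {V : Type u} [Fintype V] (G : SimpleGraph V) (σ : V → V → ℤ),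
    IsSignature σ → Fintype.card V ≤ n → ¬ HasMinor G (⊤ : SimpleGraph (Fin 4)) →
    SignedColorable G σ 3 := by
  intro n
  induction n with
  | zero =>
    intro V _ G σ hσ hcard hK4
    have : IsEmpty V := Fintype.card_eq_zero_iff.1 (by omega)
    exact ⟨fun _ => 0, fun u => this.elim u, fun u => this.elim u⟩
  | succ n ih =>
    intro V instF G σ hσ hcard hK4
    classical
    by_cases hne : Nonempty V
    swap
    · have : IsEmpty V := not_nonempty_iff.1 hne
      exact ⟨fun _ => 0, fun u => this.elim u, fun u => this.elim u⟩
    obtain ⟨v, hv⟩ := exists_low_deg G hK4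
    set s : Set V := {w | w ≠ v} with hsdef
    set G' := G.induce s with hG'def
    have hK4' : ¬ HasMinor G' (⊤ : SimpleGraph (Fin 4)) :=
      fun h => hK4 (hasMinor_of_induce G _ s h)
    have hcard' : Fintype.card s ≤ n := by
      have := card_set_lt s v (fun h => h rfl)
      omega
    obtain ⟨φ', hφ'p, hφ'm⟩ := ih G' (fun a b => σ a.val b.val)
      ⟨fun a b => hσ.1 a.val b.val, fun a b => hσ.2 a.val b.val⟩ hcard' hK4'
    -- auxiliary total function
    set ψ : V → ℤ := fun w => if h : w ≠ v then φ' ⟨w, h⟩ else 0 with hψdef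
    set F : Finset ℤ := (G.neighborFinset v).image (fun u => σ v u * ψ u) with hFdef
    have hFcard : F.card ≤ 2 := by
      refine le_trans (Finset.card_image_le) ?_
      rw [SimpleGraph.card_neighborFinset_eq_degree]
      exact hv
    have hchoice : ((({0, 1, -1} : Finset ℤ)) \ F).Nonempty := by
      have h3 : ({0, 1, -1} : Finset ℤ).card = 3 := by decide
      have := Finset.le_card_sdiff F ({0, 1, -1} : Finset ℤ)
      rw [Finset.card_pos.symm] at *
      omega
    obtain ⟨c, hc⟩ := hchoice
    rw [Finset.mem_sdiff] at hc
    obtain ⟨hcmem, hcF⟩ := hc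
    set φ : V → ℤ := fun w => if h : w ≠ v then φ' ⟨w, h⟩ else c with hφdef
    have hφv : φ v = c := by simp [hφdef]
    have hφw : ∀ w (h : w ≠ v), φ w = φ' ⟨w, h⟩ := by
      intro w h; simp [hφdef, h]
    have hψw : ∀ w (h : w ≠ v), ψ w = φ' ⟨w, h⟩ := by
      intro w h; simp [hψdef, h]
    -- the one-sided key property
    have hkey : ∀ u, G.Adj v u → φ v ≠ σ v u * φ u := by
      intro u hadj heq
      have huv : u ≠ v := hadj.ne'
      apply hcF
      rw [hFdef, Finset.mem_image]
      refine ⟨u, (SimpleGraph.mem_neighborFinset G v u).2 hadj, ?_⟩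
      rw [hψw u huv, ← hφw u huv, ← heq, hφv]
    refine ⟨φ, ?_, ?_⟩
    · intro a b hadj heq
      by_cases hav : a = v
      · subst hav
        exact hkey b hadj heq
      · by_cases hbv : b = v
        · subst hbv
          -- use symmetry
          have h2 := hkey a hadj.symm
          rcases hσ.2 a b with hs | hs
          · rw [hσ.1 b a, hs] at h2
            rw [hs, one_mul] at heq
            rw [one_mul, heq] at h2
            exact h2 rfl
          · rw [hσ.1 b a, hs] at h2
            rw [hs] at heq
            apply h2
            rw [heq]
            ring
        · -- both in s
          have := hφ'p ⟨a, hav⟩ ⟨b, hbv⟩ (by exact hadj)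
          rw [← hφw a hav, ← hφw b hbv] at this
          exact this heq
    · intro w
      by_cases hw : w ≠ v
      · rw [hφw w hw]
        exact hφ'm ⟨w, hw⟩
      · push_neg at hw
        subst hw
        rw [hφv]
        apply mem_Mset3
        simpa using hcmem
end Degeneracy


/-- Every simple signed graph whose underlying graph is `K₄`-minor-free satisfies `χ(G) ≤ 3`. -/
theorem signed_chromatic_le_three_of_K4_minor_free
    {V : Type*} [Fintype V] (G : SimpleGraph V) (σ : V → V → ℤ) (hσ : IsSignature σ)
    (hK4 : ¬ HasMinor G (⊤ : SimpleGraph (Fin 4))) :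
    signedChromaticNumber G σ ≤ 3 := by
  exact Nat.sInf_le (colorable3 (Fintype.card V) G σ hσ le_rfl hK4)
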